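/- Let a ∈ ℝ, let τ ∈ ℝ with τ ≥ 2, and define L̂ : ℝ² → ℝ² by L̂(x, y) = (τx − y + a, x) (the case det A = 1, Δ = 2 − τ ≤ 0). Then L̂ has no periodic points other than fixed points: for every p ∈ ℝ² and every natural number n ≥ 1, if L̂^[n](p) = p then L̂(p) = p. -/
import Mathlib


/-- for `det A = 1` and `tr A = τ ≥ 2`, the affine map
`L̂(x,y) = (τx − y + a, x)` has no periodic points other than fixed points. -/
theorem stmt_8 (a τ : ℝ) (hτ : 2 ≤ τ)
    (L : ℝ × ℝ → ℝ × ℝ) (hL : L = fun p => (τ * p.1 - p.2 + a, p.1)) :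
    ∀ p : ℝ × ℝ, ∀ n : ℕ, 1 ≤ n → L^[n] p = p → L p = p := by
  intro p n hn hper
  haveI : NeZero n := ⟨by omega⟩
  set x : ℕ → ℝ := fun k => (L^[k] p).1 with hx
  -- periodicity of iterates
  have hperk : ∀ q k : ℕ, L^[n * q + k] p = L^[k] p := by
    intro q k
    rw [Nat.add_comm, Function.iterate_add_apply, Function.iterate_mul,
      Function.iterate_fixed hper q]
  have hxmod : ∀ k : ℕ, x k = x (k % n) := by
    intro k
    have h := hperk (k / n) (k % n)
    rw [Nat.div_add_mod] at h
    simp only [hx, h]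
  have hxper : ∀ k : ℕ, x (k + n) = x k := by
    intro k
    rw [hxmod (k + n), hxmod k, Nat.add_mod_right]
  -- the recurrence
  have hL' : ∀ q : ℝ × ℝ, L q = (τ * q.1 - q.2 + a, q.1) := by
    intro q; rw [hL]
  have hrec : ∀ m : ℕ, x (m + 2) + x m = τ * x (m + 1) + a := by
    intro m
    have h1 : L^[m+2] p = L (L^[m+1] p) := Function.iterate_succ_apply' L (m+1) p
    have h2 : L^[m+1] p = L (L^[m] p) := Function.iterate_succ_apply' L m p
    have hsnd : (L^[m+1] p).2 = x m := by rw [h2, hL' (L^[m] p)]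
    simp only [hx] at hsnd ⊢
    rw [h1, hL' (L^[m+1] p)]
    simp only
    rw [hsnd]
    ring
  -- cyclic version
  set X : ZMod n → ℝ := fun i => x i.val with hX
  have hXcast : ∀ k : ℕ, X (k : ZMod n) = x k := by
    intro k
    simp only [hX, ZMod.val_natCast]
    exact (hxmod k).symm
  have hcyc : ∀ i : ZMod n, X (i + 1) + X (i - 1) = τ * X i + a := by
    intro i
    set k := i.val with hk
    have hik : (k : ZMod n) = i := ZMod.natCast_rightInverse i
    have e1 : i + 1 = ((k + 1 : ℕ) : ZMod n) := by push_cast [hik]; ring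
    have e2 : i - 1 = ((k + (n - 1) : ℕ) : ZMod n) := by
      push_cast [hik, Nat.cast_sub hn, ZMod.natCast_self]
      ring
    have e3 : i = ((k : ℕ) : ZMod n) := hik.symm
    rw [e1, e2, e3, hXcast, hXcast, hXcast]
    have h := hrec (k + (n - 1))
    have e4 : k + (n - 1) + 2 = (k + 1) + n := by omega
    have e5 : k + (n - 1) + 1 = k + n := by omega
    rw [e4, e5, hxper, hxper] at h
    exact h
  -- shift invariance of sums over ZMod n
  have hshift : ∀ f : ZMod n → ℝ, ∑ i : ZMod n, f (i + 1) = ∑ i : ZMod n, f i := by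
    intro f
    exact Fintype.sum_equiv (Equiv.addRight (1 : ZMod n)) _ _ (fun i => rfl)
  set S := ∑ i : ZMod n, X i with hS
  set T := ∑ i : ZMod n, X i ^ 2 with hT
  set U := ∑ i : ZMod n, X i * X (i + 1) with hU
  have hcard : (Fintype.card (ZMod n) : ℝ) = (n : ℝ) := by rw [ZMod.card]
  -- sum of recurrence : 2S = τS + na
  have hsum1 : S + S = τ * S + n * a := by
    have h : ∑ i : ZMod n, (X (i + 1) + X (i - 1)) = ∑ i : ZMod n, (τ * X i + a) :=
      Finset.sum_congr rfl (fun i _ => hcyc i)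
    rw [Finset.sum_add_distrib, Finset.sum_add_distrib, Finset.sum_const,
      ← Finset.mul_sum, nsmul_eq_mul] at h
    rw [hshift X, ] at h
    have h2 : ∑ i : ZMod n, X (i - 1) = S := by
      have := hshift (fun j => X (j - 1))
      simpa using this.symm.trans (by
        apply Finset.sum_congr rfl
        intro i _
        congr 1
        ring)
    rw [h2] at h
    rw [hS]
    rw [h]
    simp [Finset.card_univ, ZMod.card]
  -- recurrence times X i summed : 2U = τT + aS
  have hsum2 : U + U = τ * T + a * S := by
    have h : ∑ i : ZMod n, (X (i + 1) + X (i - 1)) * X i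
        = ∑ i : ZMod n, (τ * X i + a) * X i :=
      Finset.sum_congr rfl (fun i _ => by rw [hcyc i])
    have hl : ∑ i : ZMod n, (X (i + 1) + X (i - 1)) * X i = U + U := by
      have hsplit : ∀ i : ZMod n, (X (i + 1) + X (i - 1)) * X i
          = X i * X (i + 1) + X (i - 1) * X i := by intro i; ring
      rw [Finset.sum_congr rfl (fun i _ => hsplit i), Finset.sum_add_distrib]
      have h2 : ∑ i : ZMod n, X (i - 1) * X i = U := by
        have := hshift (fun j => X (j - 1) * X j)
        rw [hU, ← this]
        apply Finset.sum_congr rfl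
        intro i _
        have : i + 1 - 1 = i := by ring
        rw [this]
      rw [h2, hU]
    have hr : ∑ i : ZMod n, (τ * X i + a) * X i = τ * T + a * S := by
      have hsplit : ∀ i : ZMod n, (τ * X i + a) * X i = τ * X i ^ 2 + a * X i := by
        intro i; ring
      rw [Finset.sum_congr rfl (fun i _ => hsplit i), Finset.sum_add_distrib,
        ← Finset.mul_sum, ← Finset.mul_sum, ← hT, ← hS]
    rw [← hl, h, hr]
  -- sum of squared differences
  have hsq : ∑ i : ZMod n, (X (i + 1) - X i) ^ 2 = (2 - τ) * T - a * S := by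
    have hsplit : ∀ i : ZMod n, (X (i + 1) - X i) ^ 2
        = X (i + 1) ^ 2 + X i ^ 2 - 2 * (X i * X (i + 1)) := by intro i; ring
    rw [Finset.sum_congr rfl (fun i _ => hsplit i)]
    rw [Finset.sum_sub_distrib, Finset.sum_add_distrib, ← Finset.mul_sum,
      hshift (fun j => X j ^ 2), ← hT, ← hU]
    linarith [hsum2]
  -- Cauchy-Schwarz : S^2 ≤ n * T
  have hCS : S ^ 2 ≤ (n : ℝ) * T := by
    have := sq_sum_le_card_mul_sum_sq (s := (Finset.univ : Finset (ZMod n))) (f := X)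
    simpa [Finset.card_univ, ZMod.card, ← hS, ← hT] using this
  have hnpos : (0 : ℝ) < n := by exact_mod_cast Nat.pos_of_ne_zero (by omega)
  -- n * Σ d² = (2 - τ)(nT - S²) ≤ 0
  have hkey : (n : ℝ) * ∑ i : ZMod n, (X (i + 1) - X i) ^ 2 ≤ 0 := by
    have haS : (n : ℝ) * (a * S) = (2 - τ) * S ^ 2 := by
      have : (n : ℝ) * a = (2 - τ) * S := by linarith [hsum1]
      calc (n : ℝ) * (a * S) = ((n : ℝ) * a) * S := by ring
        _ = (2 - τ) * S ^ 2 := by rw [this]; ring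
    have : (n : ℝ) * ∑ i : ZMod n, (X (i + 1) - X i) ^ 2
        = (2 - τ) * ((n : ℝ) * T - S ^ 2) := by
      rw [hsq]; rw [mul_sub]; rw [haS]; ring
    rw [this]
    apply mul_nonpos_of_nonpos_of_nonneg
    · linarith
    · linarith
  have hsum0 : ∑ i : ZMod n, (X (i + 1) - X i) ^ 2 = 0 := by
    have hle : ∑ i : ZMod n, (X (i + 1) - X i) ^ 2 ≤ 0 := by
      nlinarith [hkey, hnpos]
    have hge : 0 ≤ ∑ i : ZMod n, (X (i + 1) - X i) ^ 2 :=
      Finset.sum_nonneg (fun i _ => sq_nonneg _)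
    linarith
  have hconst : ∀ i : ZMod n, X (i + 1) = X i := by
    intro i
    have := (Finset.sum_eq_zero_iff_of_nonneg
      (fun i _ => sq_nonneg (X (i + 1) - X i))).mp hsum0 i (Finset.mem_univ i)
    have : X (i + 1) - X i = 0 := by
      exact pow_eq_zero_iff (n := 2) (by norm_num) |>.mp this
    linarith
  -- conclude
  have hx10 : x 1 = x 0 := by
    rw [← hXcast 1, ← hXcast 0]
    have : ((1 : ℕ) : ZMod n) = (0 : ZMod n) + 1 := by push_cast; ring
    rw [this, hconst]
    norm_num
  have hxn1 : x (n - 1) = x 0 := by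
    rw [← hXcast (n - 1), ← hXcast 0]
    have e : ((n - 1 : ℕ) : ZMod n) = -1 := by
      push_cast [Nat.cast_sub hn, ZMod.natCast_self]; ring
    rw [e]
    have := hconst (-1)
    simp only [neg_add_cancel] at this
    rw [← this]
    norm_num
  have hp2 : p.2 = x (n - 1) := by
    have h1 : L^[n] p = L (L^[n - 1] p) := by
      rw [← Function.iterate_succ_apply' L (n - 1) p]
      congr 1
      omega
    have h3 := congrArg Prod.snd (h1.symm.trans hper)
    rw [hL' (L^[n - 1] p)] at h3
    exact h3.symm
  have hp1 : (L p).1 = x 1 := by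
    simp only [hx]
    rw [Function.iterate_one]
  have hLp2 : (L p).2 = p.1 := by rw [hL' p]
  have hx0 : x 0 = p.1 := by simp [hx]
  apply Prod.ext
  · rw [hp1, hx10, hx0]
  · rw [hLp2, hp2, hxn1, hx0]
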